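/- Let S be Polish, g: S^k → S measurable, and define the n-variate map g^(n): (S^n)^k → S^n acting row-wise: identifying (S^n)^k with n×k matrices x with rows x^j ∈ S^k, set g^(n)(x) := (g(x^1),...,g(x^n)). Then for any ρ ∈ P(P(S)), the n-th moment measure of T_ǧ(ρ) equals T_{g^(n)}(ρ^(n)): (T_ǧ(ρ))^(n) = T_{g^(n)}(ρ^(n)). -/

import Mathlib

open MeasureTheory MeasureTheory.Measure Set
open scoped ENNReal

section Aux

open scoped Classical in
/-- A measurable modification of the product-measure map: it agrees with `Measure.pi` on
families of probability measures and is `0` elsewhere. -/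
noncomputable def piKer {ι : Type*} [Fintype ι] {α : ι → Type*} [∀ i, MeasurableSpace (α i)]
    (μv : ∀ i, Measure (α i)) : Measure (∀ i, α i) :=
  if ∀ i, μv i Set.univ = 1 then Measure.pi μv else 0

theorem piKer_of_prob {ι : Type*} [Fintype ι] {α : ι → Type*} [∀ i, MeasurableSpace (α i)]
    (μv : ∀ i, Measure (α i)) (h : ∀ i, IsProbabilityMeasure (μv i)) :
    piKer μv = Measure.pi μv := by
  rw [piKer, if_pos fun i => (h i).measure_univ]

theorem measurable_piKer {ι : Type*} [Fintype ι] {α : ι → Type*} [∀ i, MeasurableSpace (α i)] :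
    Measurable (piKer (α := α)) := by
  classical
  have hQ : MeasurableSet {μv : ∀ i, Measure (α i) | ∀ i, μv i Set.univ = 1} := by
    have : {μv : ∀ i, Measure (α i) | ∀ i, μv i Set.univ = 1}
        = ⋂ i, (fun μv : ∀ i, Measure (α i) => μv i) ⁻¹' {ξ | ξ Set.univ = 1} := by
      ext; simp
    rw [this]
    refine MeasurableSet.iInter fun i => ?_
    exact (measurable_pi_apply i)
      ((Measure.measurable_coe MeasurableSet.univ) (measurableSet_singleton 1))
  refine Measure.measurable_of_measurable_coe _ fun A hA => ?_
  refine MeasurableSpace.induction_on_inter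
    (C := fun A _ => Measurable fun μv : ∀ i, Measure (α i) => piKer μv A)
    generateFrom_pi.symm isPiSystem_pi ?_ ?_ ?_ ?_ A hA
  · simp only [measure_empty]; exact measurable_const
  · rintro t ⟨s, hs, rfl⟩
    simp only [Set.mem_pi, Set.mem_univ, forall_true_left] at hs
    have : (fun μv : ∀ i, Measure (α i) => piKer μv (Set.pi Set.univ s))
        = fun μv => if ∀ i, μv i Set.univ = 1 then ∏ i, μv i (s i) else 0 := by
      funext μv
      simp only [piKer]
      by_cases h : ∀ i, μv i Set.univ = 1
      · haveI : ∀ i, IsProbabilityMeasure (μv i) := fun i => ⟨h i⟩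
        rw [if_pos h, if_pos h, Measure.pi_pi]
      · rw [if_neg h, if_neg h]; rfl
    rw [this]
    exact Measurable.ite hQ
      (Finset.measurable_prod _ fun i _ =>
        (Measure.measurable_coe (hs i)).comp (measurable_pi_apply i))
      measurable_const
  · intro t ht iht
    have : (fun μv : ∀ i, Measure (α i) => piKer μv tᶜ)
        = fun μv => if ∀ i, μv i Set.univ = 1 then 1 - piKer μv t else 0 := by
      funext μv
      simp only [piKer]
      by_cases h : ∀ i, μv i Set.univ = 1
      · haveI : ∀ i, IsProbabilityMeasure (μv i) := fun i => ⟨h i⟩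
        simp only [if_pos h]
        haveI : IsProbabilityMeasure (Measure.pi μv) := inferInstance
        rw [measure_compl ht (measure_ne_top _ _), measure_univ]
      · simp only [if_neg h]; rfl
    rw [this]
    exact Measurable.ite hQ (measurable_const.sub iht) measurable_const
  · intro f hd hf ihf
    have : (fun μv : ∀ i, Measure (α i) => piKer μv (⋃ m, f m))
        = fun μv => ∑' m, piKer μv (f m) := by
      funext μv
      exact measure_iUnion hd hf
    rw [this]
    exact Measurable.ennreal_tsum ihf

/-- Lebesgue integral of a product of functions of the coordinates, w.r.t. a finite power of a
measure, is the product of the integrals. -/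
theorem lintegral_pi_prod {α : Type*} [MeasurableSpace α] (μ : Measure α) [SigmaFinite μ] :
    ∀ {m : ℕ} (f : Fin m → α → ℝ≥0∞), (∀ i, Measurable (f i)) →
      ∫⁻ x : Fin m → α, ∏ i, f i (x i) ∂(Measure.pi fun _ => μ) = ∏ i, ∫⁻ a, f i a ∂μ := by
  intro m
  induction m with
  | zero =>
    intro f _
    simp [Measure.pi_univ]
  | succ m ih =>
    intro f hf
    have hF : Measurable fun x : Fin (m + 1) → α => ∏ i, f i (x i) :=
      Finset.measurable_prod _ fun i _ => (hf i).comp (measurable_pi_apply i)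
    have hmp := (measurePreserving_piFinSuccAbove (fun _ : Fin (m + 1) => μ) 0).symm
      (MeasurableEquiv.piFinSuccAbove (fun _ : Fin (m + 1) => α) 0)
    rw [← hmp.lintegral_comp hF]
    have key : ∀ z : α × (Fin m → α),
        (∏ i, f i (((MeasurableEquiv.piFinSuccAbove (fun _ : Fin (m + 1) => α) 0).symm z) i))
          = f 0 z.1 * ∏ j : Fin m, f j.succ (z.2 j) := by
      rintro ⟨a, y⟩
      have h0 : ((MeasurableEquiv.piFinSuccAbove (fun _ : Fin (m + 1) => α) 0).symm (a, y))
          = Fin.cons a y := by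
        simp [MeasurableEquiv.piFinSuccAbove, Fin.insertNthEquiv, Fin.consEquiv]
      rw [h0, Fin.prod_univ_succ]
      simp
    simp only [key]
    rw [Fin.prod_univ_succ, ← ih (fun j => f j.succ) (fun j => hf j.succ)]
    exact lintegral_prod_mul (hf 0).aemeasurable
      (Finset.measurable_prod _ fun (j : Fin m) _ =>
        (hf j.succ).comp (measurable_pi_apply j)).aemeasurable

variable {S : Type*} [MeasurableSpace S]

/-- Pushing a finite power of a product of probability measures forward along the
"transpose" map swaps the order of the two products. -/
theorem pi_transpose {k n : ℕ} (ξ : Fin k → Measure S) [∀ i, IsProbabilityMeasure (ξ i)] :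
    Measure.map (fun (x : Fin k → Fin n → S) (j : Fin n) (i : Fin k) => x i j)
        (Measure.pi fun i => Measure.pi fun _ : Fin n => ξ i)
      = Measure.pi fun _ : Fin n => Measure.pi ξ := by
  have hT : Measurable fun (x : Fin k → Fin n → S) (j : Fin n) (i : Fin k) => x i j :=
    measurable_pi_lambda _ fun j => measurable_pi_lambda _ fun i =>
      (measurable_pi_apply j).comp (measurable_pi_apply i)
  refine (Measure.pi_eq_generateFrom (fun _ => generateFrom_pi)
    (fun _ => isPiSystem_pi) (fun _ => ?_) fun s hs => ?_).symm
  · exact ⟨fun _ => Set.univ,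
      fun _ => ⟨fun _ => Set.univ, fun i _ => MeasurableSet.univ, by simp⟩,
      fun _ => measure_lt_top _ _, Set.iUnion_const _⟩
  · choose t ht hts using hs
    have hts' : ∀ j i, MeasurableSet (t j i) := fun j i => ht j i (Set.mem_univ i)
    have hsmeas : ∀ j, MeasurableSet (s j) := fun j => by
      rw [← hts j]; exact MeasurableSet.univ_pi (hts' j)
    rw [Measure.map_apply hT (MeasurableSet.univ_pi hsmeas)]
    have hpre : (fun (x : Fin k → Fin n → S) (j : Fin n) (i : Fin k) => x i j) ⁻¹'
          Set.pi Set.univ s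
        = Set.pi Set.univ fun i : Fin k => Set.pi Set.univ fun j : Fin n => t j i := by
      ext x
      simp only [Set.mem_preimage, Set.mem_univ_pi, ← hts]
      exact ⟨fun h i j => h j i, fun h j i => h i j⟩
    rw [hpre, Measure.pi_pi]
    simp only [Measure.pi_pi]
    rw [Finset.prod_comm]
    refine Finset.prod_congr rfl fun j _ => ?_
    rw [← hts j, Measure.pi_pi]

/-- A finite power of a pushforward is the pushforward of the power along the coordinatewise
map. -/
theorem pi_map_row {β γ : Type*} [MeasurableSpace β] [MeasurableSpace γ] (n : ℕ)
    (f : β → γ) (hf : Measurable f) (μ : Measure β) [IsProbabilityMeasure μ] :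
    Measure.map (fun (y : Fin n → β) (j : Fin n) => f (y j)) (Measure.pi fun _ : Fin n => μ)
      = Measure.pi fun _ : Fin n => Measure.map f μ := by
  haveI : IsProbabilityMeasure (Measure.map f μ) := isProbabilityMeasure_map hf.aemeasurable
  have hrow : Measurable fun (y : Fin n → β) (j : Fin n) => f (y j) :=
    measurable_pi_lambda _ fun j => hf.comp (measurable_pi_apply j)
  refine (Measure.pi_eq fun s hs => ?_).symm
  rw [Measure.map_apply hrow (MeasurableSet.univ_pi hs)]
  have hpre : (fun (y : Fin n → β) (j : Fin n) => f (y j)) ⁻¹' Set.pi Set.univ s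
      = Set.pi Set.univ fun j => f ⁻¹' s j := by
    ext y; simp [Set.mem_pi]
  rw [hpre, Measure.pi_pi]
  exact Finset.prod_congr rfl fun j _ => (Measure.map_apply hf (hs j)).symm

theorem bind_congr_ae {α β : Type*} [MeasurableSpace α] [MeasurableSpace β] {m : Measure α}
    {f g : α → Measure β} (h : f =ᵐ[m] g) : m.bind f = m.bind g := by
  unfold Measure.bind
  rw [Measure.map_congr h]

theorem bind_map_meas {α β γ : Type*} [MeasurableSpace α] [MeasurableSpace β] [MeasurableSpace γ]
    {m : Measure α} {f : α → β} {h : β → Measure γ} (hf : Measurable f) (hh : Measurable h) :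
    (Measure.map f m).bind h = m.bind (h ∘ f) := by
  unfold Measure.bind
  rw [Measure.map_map hh hf]

theorem map_bind_meas {α β γ : Type*} [MeasurableSpace α] [MeasurableSpace β] [MeasurableSpace γ]
    {m : Measure α} {h : α → Measure β} {f : β → γ} (hh : Measurable h) (hf : Measurable f) :
    Measure.map f (m.bind h) = m.bind fun a => Measure.map f (h a) := by
  unfold Measure.bind
  rw [← Measure.join_map_map hf, Measure.map_map (Measure.measurable_map _ hf) hh]
  rfl

end Aux

/-- **Moment measures intertwine the higher-level map and the `n`-variate maps.** For measurable
`g : S^k → S` and `ρ ∈ P(P(S))`, the `n`-th moment measure of `T_ǧ(ρ)` equals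
`T_{g^{(n)}}(ρ^{(n)})`, where `ǧ(μ₁,…,μ_k) = (μ₁⊗⋯⊗μ_k)∘g⁻¹`, `g^{(n)}` applies `g` row-wise,
`T_h(λ) = Law(h(Z₁,…,Z_k))` for `Z_i` i.i.d. `λ`, and `ρ^{(n)} = ∫ ξ^{⊗n} ρ(dξ)`. -/
theorem stmt15 {S : Type*} [MeasurableSpace S] [TopologicalSpace S] [PolishSpace S]
    [BorelSpace S] (k n : ℕ) (g : (Fin k → S) → S) (hg : Measurable g)
    (ρ : Measure (Measure S)) [IsProbabilityMeasure ρ]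
    (hρp : ∀ᵐ ξ ∂ρ, IsProbabilityMeasure ξ) :
    (Measure.map (fun ξv : Fin k → Measure S => Measure.map g (Measure.pi ξv))
          (Measure.pi fun _ : Fin k => ρ)).bind
        (fun ξ => Measure.pi fun _ : Fin n => ξ)
      = Measure.map (fun x : Fin k → Fin n → S => fun j => g (fun i => x i j))
          (Measure.pi fun _ : Fin k =>
            ρ.bind (fun ξ => Measure.pi fun _ : Fin n => ξ)) := by
  classical
  set ν : Measure (Fin k → Measure S) := Measure.pi fun _ : Fin k => ρ with hνdef
  -- measurable modifications of the kernels involved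
  set Pn : Measure S → Measure (Fin n → S) := fun ξ => piKer fun _ : Fin n => ξ with hPndef
  have hPn : Measurable Pn :=
    measurable_piKer.comp (measurable_pi_lambda _ fun _ => measurable_id)
  have hPn_eq : ∀ ξ : Measure S, IsProbabilityMeasure ξ →
      Pn ξ = Measure.pi fun _ : Fin n => ξ := fun ξ hξ => piKer_of_prob _ fun _ => hξ
  have hPn_prob : ∀ ξ : Measure S, IsProbabilityMeasure ξ → IsProbabilityMeasure (Pn ξ) := by
    intro ξ hξ
    rw [hPn_eq ξ hξ]
    infer_instance
  set F' : (Fin k → Measure S) → Measure S := fun ξv => Measure.map g (piKer ξv)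
    with hF'def
  have hF' : Measurable F' := (Measure.measurable_map g hg).comp measurable_piKer
  set κ : (Fin k → Measure S) → Measure (Fin k → Fin n → S) :=
    fun ξv => piKer fun i => Pn (ξv i) with hκdef
  have hκ : Measurable κ :=
    measurable_piKer.comp (measurable_pi_lambda _ fun i => hPn.comp (measurable_pi_apply i))
  -- a.e. facts
  have haeν : ∀ᵐ ξv ∂ν, ∀ i, IsProbabilityMeasure (ξv i) := by
    rw [ae_all_iff]
    intro i
    rw [ae_iff] at hρp ⊢
    exact Measure.pi_eval_preimage_null (μ := fun _ : Fin k => ρ) (i := i)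
      (s := {ξ | ¬IsProbabilityMeasure ξ}) hρp
  -- step 1: replace the kernels by measurable versions
  have step1 : Measure.map (fun ξv : Fin k → Measure S => Measure.map g (Measure.pi ξv)) ν
      = Measure.map F' ν := by
    refine Measure.map_congr (haeν.mono fun ξv h => ?_)
    haveI := h
    rw [hF'def]
    simp only
    rw [piKer_of_prob _ h]
  have step2 : ρ.bind (fun ξ => Measure.pi fun _ : Fin n => ξ) = ρ.bind Pn :=
    bind_congr_ae (hρp.mono fun ξ hξ => (hPn_eq ξ hξ).symm)
  have hF'prob : ∀ᵐ ξv ∂ν, IsProbabilityMeasure (F' ξv) := by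
    refine haeν.mono fun ξv h => ?_
    haveI := h
    rw [hF'def]
    simp only
    rw [piKer_of_prob _ h]
    exact Measure.isProbabilityMeasure_map hg.aemeasurable
  have step3 : (Measure.map F' ν).bind (fun ξ => Measure.pi fun _ : Fin n => ξ)
      = (Measure.map F' ν).bind Pn := by
    refine bind_congr_ae ?_
    have hsmeas : MeasurableSet {ξ : Measure S | ξ Set.univ = 1} :=
      (Measure.measurable_coe MeasurableSet.univ) (measurableSet_singleton 1)
    have : ∀ᵐ ξ ∂Measure.map F' ν, ξ Set.univ = 1 := by
      rw [ae_map_iff hF'.aemeasurable hsmeas]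
      exact hF'prob.mono fun ξv h => h.measure_univ
    exact this.mono fun ξ hξ => (hPn_eq ξ ⟨hξ⟩).symm
  -- the target measure `ρ.bind Pn` is a probability measure
  haveI hbindprob : IsProbabilityMeasure (ρ.bind Pn) := by
    constructor
    rw [Measure.bind_apply MeasurableSet.univ hPn.aemeasurable]
    have : ∫⁻ ξ, Pn ξ Set.univ ∂ρ = ∫⁻ _, 1 ∂ρ := by
      refine lintegral_congr_ae (hρp.mono fun ξ hξ => ?_)
      exact (hPn_prob ξ hξ).measure_univ
    rw [this, lintegral_one, measure_univ]
  -- step 4 : the product of `ρ.bind Pn` as a bind over `ν`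
  have step4 : (Measure.pi fun _ : Fin k => ρ.bind Pn) = ν.bind κ := by
    refine Measure.pi_eq fun s hs => ?_
    rw [Measure.bind_apply (MeasurableSet.univ_pi hs) hκ.aemeasurable]
    have : ∫⁻ ξv, κ ξv (Set.pi Set.univ s) ∂ν
        = ∫⁻ ξv, ∏ i, Pn (ξv i) (s i) ∂ν := by
      refine lintegral_congr_ae (haeν.mono fun ξv h => ?_)
      haveI : ∀ i, IsProbabilityMeasure (Pn (ξv i)) := fun i => hPn_prob _ (h i)
      rw [hκdef]
      simp only
      rw [piKer_of_prob _ fun i => this i, Measure.pi_pi]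
    rw [this, lintegral_pi_prod ρ (fun i ξ => Pn ξ (s i))
      (fun i => (Measure.measurable_coe (hs i)).comp hPn)]
    exact Finset.prod_congr rfl fun i _ =>
      (Measure.bind_apply (hs i) hPn.aemeasurable).symm
  -- put everything together
  have hG : Measurable fun (x : Fin k → Fin n → S) (j : Fin n) => g fun i => x i j :=
    measurable_pi_lambda _ fun j => hg.comp (measurable_pi_lambda _ fun i =>
      (measurable_pi_apply j).comp (measurable_pi_apply i))
  rw [step1, step3, step2, step4, bind_map_meas hF' hPn, map_bind_meas hκ hG]
  -- it remains to identify the two kernels a.e.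
  refine bind_congr_ae (haeν.mono fun ξv h => ?_)
  haveI := h
  haveI : ∀ i, IsProbabilityMeasure (Pn (ξv i)) := fun i => hPn_prob _ (h i)
  have hL : (Pn ∘ F') ξv = Measure.pi fun _ : Fin n => Measure.map g (Measure.pi ξv) := by
    have : F' ξv = Measure.map g (Measure.pi ξv) := by
      rw [hF'def]; simp only; rw [piKer_of_prob _ h]
    rw [Function.comp_apply, this]
    exact hPn_eq _ (Measure.isProbabilityMeasure_map hg.aemeasurable)
  have hR : Measure.map (fun x : Fin k → Fin n → S => fun j => g (fun i => x i j)) (κ ξv)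
      = Measure.pi fun _ : Fin n => Measure.map g (Measure.pi ξv) := by
    have hκeq : κ ξv = Measure.pi fun i => Measure.pi fun _ : Fin n => ξv i := by
      rw [hκdef]
      simp only
      rw [piKer_of_prob _ fun i => this i]
      refine congrArg Measure.pi (funext fun i => ?_)
      exact hPn_eq _ (h i)
    rw [hκeq]
    have hGsplit : (fun x : Fin k → Fin n → S => fun j => g (fun i => x i j))
        = (fun (y : Fin n → Fin k → S) (j : Fin n) => g (y j))
          ∘ (fun (x : Fin k → Fin n → S) (j : Fin n) (i : Fin k) => x i j) := rfl
    have hT : Measurable fun (x : Fin k → Fin n → S) (j : Fin n) (i : Fin k) => x i j :=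
      measurable_pi_lambda _ fun j => measurable_pi_lambda _ fun i =>
        (measurable_pi_apply j).comp (measurable_pi_apply i)
    have hrow : Measurable fun (y : Fin n → Fin k → S) (j : Fin n) => g (y j) :=
      measurable_pi_lambda _ fun j => hg.comp (measurable_pi_apply j)
    rw [hGsplit, ← Measure.map_map hrow hT, pi_transpose, pi_map_row n g hg]
  rw [hL]
  exact hR.symm
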